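/- The function σ(t) := erf(t) + (2/√π) e^{-t²} (−t + (118/15)t³ − (68/15)t⁵ + (8/15)t⁷) satisfies ∫₀^∞ (1 − σ(t)) t^{2(j−1)} dt = 0 for j = 1, 2, 3. -/

import Mathlib

open MeasureTheory Real

/-- The error function `erf(t) = (2/√π) ∫₀^t e^{-s²} ds`. -/
noncomputable def erf (t : ℝ) : ℝ := (2 / Real.sqrt Real.pi) * ∫ s in (0:ℝ)..t, Real.exp (-s ^ 2)

/-- Seventh-order regularizing function for the double-layer operator. -/
noncomputable def σK (t : ℝ) : ℝ :=
  erf t + (2 / Real.sqrt Real.pi) * Real.exp (-t ^ 2) *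
    (-t + (118 / 15) * t ^ 3 - (68 / 15) * t ^ 5 + (8 / 15) * t ^ 7)

section Aux
open Set Filter Topology

lemma gauss_cont : Continuous fun s : ℝ => Real.exp (-s ^ 2) := by
  exact Real.continuous_exp.comp (continuous_pow 2).neg

lemma erf_hasDerivAt (t : ℝ) :
    HasDerivAt erf (2 / Real.sqrt Real.pi * Real.exp (-t ^ 2)) t := by
  have h : HasDerivAt (fun u => ∫ s in (0:ℝ)..u, Real.exp (-s ^ 2)) (Real.exp (-t ^ 2)) t :=
    intervalIntegral.integral_hasDerivAt_right (gauss_cont.intervalIntegrable _ _)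
      (gauss_cont.aestronglyMeasurable.stronglyMeasurableAtFilter) gauss_cont.continuousAt
  exact h.const_mul _

lemma gauss_integrableOn : IntegrableOn (fun s : ℝ => Real.exp (-s ^ 2)) (Ioi 0) := by
  have := (integrable_exp_neg_mul_sq (b := 1) one_pos).integrableOn (s := Ioi 0)
  simpa using this

lemma gauss_integrableOn_half : IntegrableOn (fun s : ℝ => Real.exp (-(1/2) * s ^ 2)) (Ioi 0) := by
  exact (integrable_exp_neg_mul_sq (b := 1/2) (by norm_num)).integrableOn

lemma integ_pow (n : ℕ) : IntegrableOn (fun t : ℝ => t ^ n * Real.exp (-t ^ 2)) (Ioi 0) := by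
  have h := integrableOn_rpow_mul_exp_neg_mul_sq (b := 1) one_pos
    (s := (n : ℝ)) (lt_of_lt_of_le neg_one_lt_zero (Nat.cast_nonneg n))
  refine h.congr_fun (fun x hx => ?_) measurableSet_Ioi
  beta_reduce
  rw [Real.rpow_natCast]
  norm_num

lemma integ_pow_half (n : ℕ) :
    IntegrableOn (fun t : ℝ => t ^ n * Real.exp (-(1/2) * t ^ 2)) (Ioi 0) := by
  have h := integrableOn_rpow_mul_exp_neg_mul_sq (b := 1/2) (by norm_num)
    (s := (n : ℝ)) (lt_of_lt_of_le neg_one_lt_zero (Nat.cast_nonneg n))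
  refine h.congr_fun (fun x hx => ?_) measurableSet_Ioi
  beta_reduce
  rw [Real.rpow_natCast]

lemma tendsto_aux (n : ℕ) : Tendsto (fun t : ℝ => t ^ n * Real.exp (-t ^ 2)) atTop (𝓝 0) := by
  have h := rpow_mul_exp_neg_mul_sq_isLittleO_exp_neg (b := 1) one_pos (n : ℝ)
  have h2 : Tendsto (fun t : ℝ => Real.exp (-(1/2) * t)) atTop (𝓝 0) := by
    apply tendsto_exp_atBot.comp
    exact (tendsto_const_mul_atBot_of_neg (by norm_num)).2 tendsto_id
  have h3 := h.tendsto_zero_of_tendsto h2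
  refine h3.congr' ?_
  filter_upwards [eventually_gt_atTop (0:ℝ)] with x hx
  rw [Real.rpow_natCast]
  norm_num

lemma tendsto_aux_half (n : ℕ) :
    Tendsto (fun t : ℝ => t ^ n * Real.exp (-(1/2) * t ^ 2)) atTop (𝓝 0) := by
  have h := rpow_mul_exp_neg_mul_sq_isLittleO_exp_neg (b := 1/2) (by norm_num) (n : ℝ)
  have h2 : Tendsto (fun t : ℝ => Real.exp (-(1/2) * t)) atTop (𝓝 0) := by
    apply tendsto_exp_atBot.comp
    exact (tendsto_const_mul_atBot_of_neg (by norm_num)).2 tendsto_id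
  have h3 := h.tendsto_zero_of_tendsto h2
  refine h3.congr' ?_
  filter_upwards [eventually_gt_atTop (0:ℝ)] with x hx
  rw [Real.rpow_natCast]


lemma gauss_total : (∫ s in Ioi (0:ℝ), Real.exp (-s ^ 2)) = Real.sqrt Real.pi / 2 := by
  have := integral_gaussian_Ioi 1
  simp only [neg_mul, one_mul, div_one] at this
  simpa using this

lemma gauss_total_half :
    (∫ s in Ioi (0:ℝ), Real.exp (-(1/2) * s ^ 2)) = Real.sqrt (2 * Real.pi) / 2 := by
  have := integral_gaussian_Ioi (1/2)
  rw [this]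
  norm_num [mul_comm]

lemma erf_tail {t : ℝ} (ht : 0 ≤ t) :
    1 - erf t = (2 / Real.sqrt Real.pi) * ∫ s in Ioi t, Real.exp (-s ^ 2) := by
  have hsplit : (∫ s in Ioi (0:ℝ), Real.exp (-s ^ 2))
      = (∫ s in Ioc 0 t, Real.exp (-s ^ 2)) + ∫ s in Ioi t, Real.exp (-s ^ 2) := by
    rw [← setIntegral_union (Ioc_disjoint_Ioi le_rfl) measurableSet_Ioi
      (gauss_integrableOn.mono_set (Ioc_subset_Ioi_self.trans (Ioi_subset_Ioi (le_refl 0))))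
      (gauss_integrableOn.mono_set (Ioi_subset_Ioi ht))]
    rw [Ioc_union_Ioi_eq_Ioi ht]
  have hival : (∫ s in (0:ℝ)..t, Real.exp (-s ^ 2)) = ∫ s in Ioc 0 t, Real.exp (-s ^ 2) :=
    intervalIntegral.integral_of_le ht
  have hπ : Real.sqrt Real.pi ≠ 0 := ne_of_gt (Real.sqrt_pos.2 Real.pi_pos)
  rw [erf, hival]
  have : (∫ s in Ioc (0:ℝ) t, Real.exp (-s ^ 2))
      = Real.sqrt Real.pi / 2 - ∫ s in Ioi t, Real.exp (-s ^ 2) := by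
    rw [← gauss_total, hsplit]; ring
  rw [this]
  field_simp
  ring

lemma erf_le_one {t : ℝ} (ht : 0 ≤ t) : erf t ≤ 1 := by
  have h := erf_tail ht
  have hpos : 0 ≤ ∫ s in Ioi t, Real.exp (-s ^ 2) :=
    setIntegral_nonneg measurableSet_Ioi (fun x _ => (Real.exp_pos _).le)
  nlinarith [Real.sqrt_pos.2 Real.pi_pos, mul_nonneg (div_nonneg (by norm_num : (0:ℝ) ≤ 2) (Real.sqrt_pos.2 Real.pi_pos).le) hpos]

lemma erfc_le {t : ℝ} (ht : 0 ≤ t) :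
    1 - erf t ≤ (2 / Real.sqrt Real.pi) * (Real.sqrt (2 * Real.pi) / 2)
      * Real.exp (-(1/2) * t ^ 2) := by
  have h1 : (∫ s in Ioi t, Real.exp (-s ^ 2))
      ≤ ∫ s in Ioi t, Real.exp (-(1/2) * t ^ 2) * Real.exp (-(1/2) * s ^ 2) := by
    apply setIntegral_mono_on
    · exact gauss_integrableOn.mono_set (Ioi_subset_Ioi ht)
    · exact (gauss_integrableOn_half.mono_set (Ioi_subset_Ioi ht)).const_mul _
    · exact measurableSet_Ioi
    · intro s hs
      rw [← Real.exp_add, Real.exp_le_exp]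
      have hts : t ≤ s := le_of_lt hs
      nlinarith
  have h2 : (∫ s in Ioi t, Real.exp (-(1/2) * t ^ 2) * Real.exp (-(1/2) * s ^ 2))
      = Real.exp (-(1/2) * t ^ 2) * ∫ s in Ioi t, Real.exp (-(1/2) * s ^ 2) := by
    rw [integral_const_mul]
  have h3 : (∫ s in Ioi t, Real.exp (-(1/2) * s ^ 2))
      ≤ ∫ s in Ioi (0:ℝ), Real.exp (-(1/2) * s ^ 2) := by
    apply setIntegral_mono_set gauss_integrableOn_half
    · exact Eventually.of_forall fun x => (Real.exp_pos _).le
    · exact HasSubset.Subset.eventuallyLE (Ioi_subset_Ioi ht)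
  rw [erf_tail ht]
  have hc : (0:ℝ) ≤ 2 / Real.sqrt Real.pi :=
    div_nonneg (by norm_num) (Real.sqrt_nonneg _)
  calc (2 / Real.sqrt Real.pi) * ∫ s in Ioi t, Real.exp (-s ^ 2)
      ≤ (2 / Real.sqrt Real.pi) * (Real.exp (-(1/2) * t ^ 2) * (Real.sqrt (2 * Real.pi) / 2)) := by
        apply mul_le_mul_of_nonneg_left _ hc
        refine h1.trans ?_
        rw [h2]
        apply mul_le_mul_of_nonneg_left _ (Real.exp_pos _).le
        rw [← gauss_total_half]
        exact h3
    _ = _ := by ring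

lemma erf_continuous : Continuous erf :=
  continuous_iff_continuousAt.2 fun t => (erf_hasDerivAt t).continuousAt

lemma master (n : ℕ) (R R' : ℝ → ℝ)
    (hR : ∀ t, HasDerivAt R (R' t) t)
    (hR0 : R 0 = 0)
    (hlim : Tendsto (fun t : ℝ => Real.exp (-t ^ 2) * R t) atTop (𝓝 0))
    (hid : ∀ t : ℝ, 2 * t * R t - R' t
      = t ^ (n+1) / ((n : ℝ)+1)
        - (-t + (118/15) * t ^ 3 - (68/15) * t ^ 5 + (8/15) * t ^ 7) * t ^ n) :
    ∫ t in Ioi (0:ℝ), (1 - σK t) * t ^ n = 0 := by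
  set c : ℝ := 2 / Real.sqrt Real.pi with hc
  have hc0 : 0 ≤ c := div_nonneg (by norm_num) (Real.sqrt_nonneg _)
  set P : ℝ → ℝ := fun t => -t + (118/15) * t ^ 3 - (68/15) * t ^ 5 + (8/15) * t ^ 7 with hP
  set F : ℝ → ℝ := fun t =>
    (1 - erf t) * t ^ (n+1) / ((n : ℝ)+1) - c * (Real.exp (-t ^ 2) * R t) with hF
  have hn1 : ((n : ℝ) + 1) ≠ 0 := by positivity
  -- derivative
  have hFderiv : ∀ t : ℝ, HasDerivAt F ((1 - σK t) * t ^ n) t := by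
    intro t
    have h1 : HasDerivAt (fun t : ℝ => 1 - erf t) (-(c * Real.exp (-t ^ 2))) t :=
      (erf_hasDerivAt t).const_sub 1
    have h2 : HasDerivAt (fun t : ℝ => t ^ (n+1)) (((n : ℝ)+1) * t ^ n) t := by
      have := hasDerivAt_pow (n+1) t
      simpa using this
    have h3 := (h1.mul h2).div_const ((n : ℝ)+1)
    have hE : HasDerivAt (fun t : ℝ => Real.exp (-t ^ 2))
        (Real.exp (-t ^ 2) * (-(2 * t))) t := by
      have := ((hasDerivAt_pow 2 t).neg).exp
      simpa using this
    have h4 := ((hE.mul (hR t)).const_mul c)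
    have h5 := h3.sub h4
    refine HasDerivAt.congr_deriv h5 (Eq.symm ?_)
    have hidt := hid t
    simp only [σK, ← hc, ← hP]
    field_simp
    field_simp at hidt
    linear_combination (-(2:ℝ) * (Real.sqrt Real.pi)⁻¹ * Real.exp (-t ^ 2)) * hidt
  -- integrability of the integrand on Ioi 0
  have hint : IntegrableOn (fun t : ℝ => (1 - σK t) * t ^ n) (Ioi 0) := by
    have heq : ∀ t : ℝ, (1 - σK t) * t ^ n
        = (1 - erf t) * t ^ n
          - c * (-(t ^ (n+1) * Real.exp (-t ^ 2)) + (118/15) * (t ^ (n+3) * Real.exp (-t ^ 2))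
            - (68/15) * (t ^ (n+5) * Real.exp (-t ^ 2))
            + (8/15) * (t ^ (n+7) * Real.exp (-t ^ 2))) := by
      intro t; simp only [σK, ← hc]; ring
    have h1 : IntegrableOn (fun t : ℝ => (1 - erf t) * t ^ n) (Ioi 0) := by
      apply Integrable.mono' (((integ_pow_half n).const_mul
        (c * (Real.sqrt (2 * Real.pi) / 2))))
      · exact ((continuous_const.sub erf_continuous).mul (continuous_pow n)).aestronglyMeasurable
      · filter_upwards [ae_restrict_mem measurableSet_Ioi] with t ht
        have ht0 : (0:ℝ) ≤ t := le_of_lt ht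
        rw [Real.norm_eq_abs, abs_mul, abs_of_nonneg (sub_nonneg.2 (erf_le_one ht0)),
          abs_of_nonneg (pow_nonneg ht0 n)]
        have := erfc_le ht0
        calc (1 - erf t) * t ^ n
            ≤ (c * (Real.sqrt (2 * Real.pi) / 2) * Real.exp (-(1/2) * t ^ 2)) * t ^ n := by
              apply mul_le_mul_of_nonneg_right this (pow_nonneg ht0 n)
          _ = c * (Real.sqrt (2 * Real.pi) / 2) * (t ^ n * Real.exp (-(1/2) * t ^ 2)) := by ring
    have h2 : IntegrableOn (fun t : ℝ =>
        c * (-(t ^ (n+1) * Real.exp (-t ^ 2)) + (118/15) * (t ^ (n+3) * Real.exp (-t ^ 2))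
          - (68/15) * (t ^ (n+5) * Real.exp (-t ^ 2))
          + (8/15) * (t ^ (n+7) * Real.exp (-t ^ 2)))) (Ioi 0) := by
      exact ((((integ_pow (n+1)).neg.add ((integ_pow (n+3)).const_mul _)).sub
        ((integ_pow (n+5)).const_mul _)).add ((integ_pow (n+7)).const_mul _)).const_mul c
    exact (funext heq : _) ▸ (h1.sub h2)
  -- limit of F at infinity
  have hFlim : Tendsto F atTop (𝓝 0) := by
    have hmain : Tendsto (fun t : ℝ => (1 - erf t) * t ^ (n+1) / ((n : ℝ)+1)) atTop (𝓝 0) := by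
      have hub := (tendsto_aux_half (n+1)).const_mul (c * (Real.sqrt (2 * Real.pi) / 2) / ((n : ℝ)+1))
      rw [mul_zero] at hub
      apply tendsto_of_tendsto_of_tendsto_of_le_of_le' tendsto_const_nhds hub
      · filter_upwards [eventually_ge_atTop (0:ℝ)] with t ht0
        have h1 : 0 ≤ 1 - erf t := sub_nonneg.2 (erf_le_one ht0)
        positivity
      · filter_upwards [eventually_ge_atTop (0:ℝ)] with t ht0
        have h1 := erfc_le ht0
        have h2 : (1 - erf t) * t ^ (n+1)
            ≤ (c * (Real.sqrt (2 * Real.pi) / 2) * Real.exp (-(1/2) * t ^ 2)) * t ^ (n+1) :=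
          mul_le_mul_of_nonneg_right h1 (pow_nonneg ht0 _)
        rw [div_le_iff₀ (by positivity : (0:ℝ) < (n : ℝ)+1)]
        calc (1 - erf t) * t ^ (n+1) ≤ _ := h2
          _ = c * (Real.sqrt (2 * Real.pi) / 2) / ((n : ℝ)+1)
              * (t ^ (n+1) * Real.exp (-(1/2) * t ^ 2)) * ((n : ℝ)+1) := by
            field_simp
    have := hmain.sub (hlim.const_mul c)
    simpa using this
  -- FTC
  have hF0 : F 0 = 0 := by
    simp [hF, hR0]
  have := integral_Ioi_of_hasDerivAt_of_tendsto
    (f := F) (f' := fun t => (1 - σK t) * t ^ n) (a := 0) (m := 0)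
    (hFderiv 0).continuousAt.continuousWithinAt
    (fun x _ => hFderiv x) hint hFlim
  rw [this, hF0, sub_zero]



lemma moment0 : ∫ t in Set.Ioi (0:ℝ), (1 - σK t) * t ^ 0 = 0 := by
  apply master 0 (fun t => -t^2 + 22/15*t^4 - 4/15*t^6)
    (fun t => -(2*t) + 88/15*t^3 - 24/15*t^5)
  · intro t
    have h := ((hasDerivAt_pow 2 t).neg.add
      (HasDerivAt.const_mul (22/15:ℝ) (hasDerivAt_pow 4 t))).sub
      (HasDerivAt.const_mul (4/15:ℝ) (hasDerivAt_pow 6 t))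
    refine HasDerivAt.congr_deriv h (Eq.symm ?_)
    push_cast
    ring
  · norm_num
  · have h := ((tendsto_aux 2).neg.add ((tendsto_aux 4).const_mul (22/15:ℝ))).sub
      ((tendsto_aux 6).const_mul (4/15:ℝ))
    have h' := h.congr (fun t => by ring :
      ∀ t : ℝ, -(t^2 * Real.exp (-t^2)) + 22/15 * (t^4 * Real.exp (-t^2))
        - 4/15 * (t^6 * Real.exp (-t^2))
        = Real.exp (-t^2) * (-t^2 + 22/15*t^4 - 4/15*t^6))
    simpa using h'
  · intro t
    push_cast
    ring

lemma moment1 : ∫ t in Set.Ioi (0:ℝ), (1 - σK t) * t ^ 2 = 0 := by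
  apply master 2 (fun t => -(1/3)*t^4 + 6/5*t^6 - 4/15*t^8)
    (fun t => -(4/3)*t^3 + 36/5*t^5 - 32/15*t^7)
  · intro t
    have h := (((HasDerivAt.const_mul (-(1/3):ℝ) (hasDerivAt_pow 4 t)).add
      (HasDerivAt.const_mul (6/5:ℝ) (hasDerivAt_pow 6 t))).sub
      (HasDerivAt.const_mul (4/15:ℝ) (hasDerivAt_pow 8 t)))
    refine HasDerivAt.congr_deriv h (Eq.symm ?_)
    push_cast
    ring
  · norm_num
  · have h := (((tendsto_aux 4).const_mul (-(1/3):ℝ)).add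
      ((tendsto_aux 6).const_mul (6/5:ℝ))).sub ((tendsto_aux 8).const_mul (4/15:ℝ))
    have h' := h.congr (fun t => by ring :
      ∀ t : ℝ, -(1/3) * (t^4 * Real.exp (-t^2)) + 6/5 * (t^6 * Real.exp (-t^2))
        - 4/15 * (t^8 * Real.exp (-t^2))
        = Real.exp (-t^2) * (-(1/3)*t^4 + 6/5*t^6 - 4/15*t^8))
    simpa using h'
  · intro t
    push_cast
    ring

lemma moment2 : ∫ t in Set.Ioi (0:ℝ), (1 - σK t) * t ^ 4 = 0 := by
  apply master 4 (fun t => -(1/5)*t^6 + 14/15*t^8 - 4/15*t^10)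
    (fun t => -(6/5)*t^5 + 112/15*t^7 - 8/3*t^9)
  · intro t
    have h := (((HasDerivAt.const_mul (-(1/5):ℝ) (hasDerivAt_pow 6 t)).add
      (HasDerivAt.const_mul (14/15:ℝ) (hasDerivAt_pow 8 t))).sub
      (HasDerivAt.const_mul (4/15:ℝ) (hasDerivAt_pow 10 t)))
    refine HasDerivAt.congr_deriv h (Eq.symm ?_)
    push_cast
    ring
  · norm_num
  · have h := (((tendsto_aux 6).const_mul (-(1/5):ℝ)).add
      ((tendsto_aux 8).const_mul (14/15:ℝ))).sub ((tendsto_aux 10).const_mul (4/15:ℝ))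
    have h' := h.congr (fun t => by ring :
      ∀ t : ℝ, -(1/5) * (t^6 * Real.exp (-t^2)) + 14/15 * (t^8 * Real.exp (-t^2))
        - 4/15 * (t^10 * Real.exp (-t^2))
        = Real.exp (-t^2) * (-(1/5)*t^6 + 14/15*t^8 - 4/15*t^10))
    simpa using h'
  · intro t
    push_cast
    ring

end Aux

/-- The moment conditions `∫₀^∞ (1 − σ(t)) t^{2(j−1)} dt = 0` for `j = 1, 2, 3`. -/
theorem sigmaK_moments :
    ∀ j : ℕ, 1 ≤ j → j ≤ 3 → ∫ t in Set.Ioi (0:ℝ), (1 - σK t) * t ^ (2 * (j - 1)) = 0 := by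
  intro j hj1 hj3
  interval_cases j
  · simpa using moment0
  · simpa using moment1
  · simpa using moment2
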